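/- Suppose ‖Q_0‖ ≤ C_max/(1 − β) and the parameter sequence satisfies |θ_n| ≤ 1 for all n, |θ_n| monotonically decreasing to zero, and ∑_{n=1}^{∞} α_n |θ_n| < ∞. Then the iterates of smooth two-step Q-learning are uniformly bounded: there exists a finite constant D, namely D = (C_max/(1 − β) + (log|A|)/(N(1 − β)))(1 + β|θ_0|) · ∏_{i=1}^{∞} (1 + α_i β² |θ_i|), such that ‖Q_n‖ ≤ D for all n ∈ ℕ. -/

import Mathlib

open Finset Real Filter

variable {S A : Type*}

/-- Maximum norm `‖Q‖ = max_{(i,a)} |Q(i,a)|`. -/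
noncomputable def maxNorm [Fintype S] [Fintype A] [Nonempty S] [Nonempty A]
    (Q : S × A → ℝ) : ℝ :=
  Finset.univ.sup' Finset.univ_nonempty fun x => |Q x|

/-- One smooth two-step Q-learning (S-TSQL) update: the selected pair `sa` is updated
using rewards `c'`, `c''`, next states `j`, `k`, step size `α`, parameter `θ`, and the
log-sum-exp operator with parameter `N` in place of the max; all other entries stay
unchanged. -/
noncomputable def stsqlUpdate [Fintype A] [DecidableEq S] [DecidableEq A]
    (β N : ℝ) (Q : S × A → ℝ) (sa : S × A) (j k : S) (c' c'' α θ : ℝ) : S × A → ℝ :=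
  fun x => if x = sa then
      (1 - α) * Q sa +
        α * (c' + (β / N) * Real.log (∑ b, Real.exp (N * Q (j, b)))
          + β * θ * (c'' + (β / N) * Real.log (∑ e, Real.exp (N * Q (k, e)))))
    else Q x

lemma abs_le_maxNorm [Fintype S] [Fintype A] [Nonempty S] [Nonempty A]
    (Q : S × A → ℝ) (x : S × A) : |Q x| ≤ maxNorm Q :=
  Finset.le_sup' (fun y : S × A => |Q y|) (Finset.mem_univ x)

lemma maxNorm_nonneg [Fintype S] [Fintype A] [Nonempty S] [Nonempty A]
    (Q : S × A → ℝ) : 0 ≤ maxNorm Q :=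
  le_trans (abs_nonneg _) (abs_le_maxNorm Q (Classical.arbitrary _))

lemma maxNorm_le [Fintype S] [Fintype A] [Nonempty S] [Nonempty A]
    {Q : S × A → ℝ} {B : ℝ} (h : ∀ x, |Q x| ≤ B) : maxNorm Q ≤ B :=
  Finset.sup'_le _ _ fun x _ => h x

lemma lse_abs_le [Fintype S] [Fintype A] [Nonempty S] [Nonempty A]
    (N : ℝ) (hN : 0 < N) (Q : S × A → ℝ) (j : S) :
    |Real.log (∑ b, Real.exp (N * Q (j, b)))| ≤
      Real.log (Fintype.card A) + N * maxNorm Q := by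
  have hQ0 := maxNorm_nonneg Q
  have hcard : (0:ℝ) < Fintype.card A := by exact_mod_cast Fintype.card_pos
  have hlogA : 0 ≤ Real.log (Fintype.card A) :=
    Real.log_nonneg (by exact_mod_cast Fintype.card_pos)
  have hpos : (0:ℝ) < ∑ b, Real.exp (N * Q (j, b)) :=
    Finset.sum_pos (fun b _ => Real.exp_pos _) Finset.univ_nonempty
  rw [abs_le]
  obtain ⟨b0⟩ := (inferInstance : Nonempty A)
  constructor
  · have h1 : Real.exp (N * (-(maxNorm Q))) ≤ Real.exp (N * Q (j, b0)) := by
      apply Real.exp_le_exp.2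
      have h := abs_le.1 (abs_le_maxNorm Q (j, b0))
      nlinarith [h.1]
    have h2 : Real.exp (N * Q (j, b0)) ≤ ∑ b, Real.exp (N * Q (j, b)) :=
      Finset.single_le_sum (f := fun b : A => Real.exp (N * Q (j, b)))
        (fun b _ => (Real.exp_pos _).le) (Finset.mem_univ b0)
    have h3 := Real.log_le_log (Real.exp_pos _) (h1.trans h2)
    rw [Real.log_exp] at h3
    nlinarith
  · have h1 : ∑ b, Real.exp (N * Q (j, b)) ≤
        (Fintype.card A : ℝ) * Real.exp (N * maxNorm Q) := by
      calc ∑ b, Real.exp (N * Q (j, b)) ≤ ∑ _b : A, Real.exp (N * maxNorm Q) := by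
            apply Finset.sum_le_sum
            intro b _
            apply Real.exp_le_exp.2
            have h := abs_le.1 (abs_le_maxNorm Q (j, b))
            nlinarith [h.2]
        _ = (Fintype.card A : ℝ) * Real.exp (N * maxNorm Q) := by
            rw [Finset.sum_const, Finset.card_univ, nsmul_eq_mul]
    have h2 := Real.log_le_log hpos h1
    rw [Real.log_mul (ne_of_gt hcard) (ne_of_gt (Real.exp_pos _)), Real.log_exp] at h2
    linarith

set_option maxHeartbeats 1000000 in
/-- Under `‖Q₀‖ ≤ C_max/(1−β)`, `|θₙ| ≤ 1`, `|θₙ| ↓ 0`, and `∑ₙ αₙ|θₙ| < ∞`, the S-TSQL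
iterates are uniformly bounded by
`D = (C_max/(1−β) + log|A|/(N(1−β)))(1 + β|θ₀|) ∏_{i=1}^∞ (1 + αᵢ β² |θᵢ|)`. -/
theorem stsql_iterates_uniformly_bounded [Fintype S] [Fintype A] [Nonempty S] [Nonempty A]
    [DecidableEq S] [DecidableEq A]
    (β Cmax : ℝ) (hβ0 : 0 ≤ β) (hβ1 : β < 1) (hC : 0 ≤ Cmax)
    (N : ℝ) (hN : 0 < N)
    (Q : ℕ → S × A → ℝ) (sa : ℕ → S × A) (j k : ℕ → S) (c' c'' α θ : ℕ → ℝ)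
    (hc' : ∀ n, |c' n| ≤ Cmax) (hc'' : ∀ n, |c'' n| ≤ Cmax)
    (hα0 : ∀ n, 0 ≤ α n) (hα1 : ∀ n, α n ≤ 1)
    (hθ1 : ∀ n, |θ n| ≤ 1) (hθmono : Antitone fun n => |θ n|)
    (hθ0 : Tendsto (fun n => |θ n|) atTop (nhds 0))
    (hsum : Summable fun n => α n * |θ n|)
    (hupd : ∀ n, Q (n + 1) =
      stsqlUpdate β N (Q n) (sa n) (j n) (k n) (c' n) (c'' n) (α n) (θ n))
    (hQ0 : maxNorm (Q 0) ≤ Cmax / (1 - β)) :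
    ∃ D : ℝ, D = (Cmax / (1 - β) + Real.log (Fintype.card A) / (N * (1 - β))) *
        (1 + β * |θ 0|) * (∏' i : ℕ, (1 + α (i + 1) * β ^ 2 * |θ (i + 1)|)) ∧
      ∀ n : ℕ, maxNorm (Q n) ≤ D := by
  have hA1 : (1:ℝ) ≤ Fintype.card A := by exact_mod_cast Fintype.card_pos
  have hLA0 : 0 ≤ Real.log (Fintype.card A) := Real.log_nonneg hA1
  set LA := Real.log (Fintype.card A) with hLAdef
  have h1β : 0 < 1 - β := by linarith
  set G : ℝ := Cmax / (1 - β) + LA / (N * (1 - β)) with hGdef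
  have hG0 : 0 ≤ G := by positivity
  set M : ℝ := Cmax + β * (LA / N) with hMdef
  have hM0 : 0 ≤ M := by positivity
  have hMG : M ≤ (1 - β) * G := by
    have h1 : β * (LA / N) ≤ LA / N := by
      nlinarith [div_nonneg hLA0 hN.le]
    have h2 : (1 - β) * (Cmax / (1 - β) + LA / (N * (1 - β))) = Cmax + LA / N := by
      field_simp
    rw [hGdef, hMdef, h2]
    linarith
  have hCG : Cmax / (1 - β) ≤ G := by
    rw [hGdef]
    have : 0 ≤ LA / (N * (1 - β)) := by positivity
    linarith
  -- the product factors
  set f : ℕ → ℝ := fun i => 1 + α (i + 1) * β ^ 2 * |θ (i + 1)| with hfdef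
  have hf1 : ∀ i, 1 ≤ f i := by
    intro i
    have h : 0 ≤ α (i + 1) * β ^ 2 * |θ (i + 1)| :=
      mul_nonneg (mul_nonneg (hα0 _) (sq_nonneg β)) (abs_nonneg _)
    simp only [hfdef]
    linarith
  have hfpos : ∀ i, 0 < f i := fun i => lt_of_lt_of_le one_pos (hf1 i)
  have hsum1 : Summable (fun i => α (i + 1) * |θ (i + 1)|) :=
    (summable_nat_add_iff 1).mpr hsum
  have hsum2 : Summable (fun i => α (i + 1) * β ^ 2 * |θ (i + 1)|) := by
    apply Summable.congr (hsum1.mul_left (β ^ 2))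
    intro i; ring
  have hlogsum : Summable (fun i => Real.log (f i)) := by
    apply Summable.of_nonneg_of_le (fun i => Real.log_nonneg (hf1 i)) _ hsum2
    intro i
    have := Real.log_le_sub_one_of_pos (hfpos i)
    simp only [hfdef] at this ⊢
    linarith
  have hHasProd : HasProd f (Real.exp (∑' i, Real.log (f i))) := by
    have h := hlogsum.hasSum.rexp
    have heq : (Real.exp ∘ fun i => Real.log (f i)) = f := by
      funext i; exact Real.exp_log (hfpos i)
    rwa [heq] at h
  have htprod : ∏' i, f i = Real.exp (∑' i, Real.log (f i)) := hHasProd.tprod_eq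
  have hPle : ∀ n, ∏ i ∈ Finset.range n, f i ≤ ∏' i, f i := by
    intro n
    have h1 : ∏ i ∈ Finset.range n, f i =
        Real.exp (∑ i ∈ Finset.range n, Real.log (f i)) := by
      rw [Real.exp_sum]
      exact Finset.prod_congr rfl fun i _ => (Real.exp_log (hfpos i)).symm
    rw [h1, htprod]
    exact Real.exp_le_exp.2
      (Summable.sum_le_tsum _ (fun i _ => Real.log_nonneg (hf1 i)) hlogsum)
  have hprod1 : ∀ n, (1:ℝ) ≤ ∏ i ∈ Finset.range n, f i := by
    intro n
    calc (1:ℝ) = ∏ _i ∈ Finset.range n, (1:ℝ) := by simp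
      _ ≤ ∏ i ∈ Finset.range n, f i :=
        Finset.prod_le_prod (fun i _ => zero_le_one) (fun i _ => hf1 i)
  -- one-step estimate
  have step : ∀ n B, 0 ≤ B → maxNorm (Q n) ≤ B →
      maxNorm (Q (n + 1)) ≤
        max B ((1 - α n) * B + α n * (1 + β * |θ n|) * (M + β * B)) := by
    intro n B hB hQB
    rw [hupd n]
    apply maxNorm_le
    intro x
    simp only [stsqlUpdate]
    split_ifs with hx
    · have hQsa : |Q n (sa n)| ≤ B := le_trans (abs_le_maxNorm _ _) hQB
      have hX := lse_abs_le N hN (Q n) (j n)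
      have hY := lse_abs_le N hN (Q n) (k n)
      have hmax : maxNorm (Q n) ≤ B := hQB
      have hNB := mul_le_mul_of_nonneg_left hmax hN.le
      have hXB : |Real.log (∑ b, Real.exp (N * Q n (j n, b)))| ≤ LA + N * B := by
        refine hX.trans ?_; linarith
      have hYB : |Real.log (∑ e, Real.exp (N * Q n (k n, e)))| ≤ LA + N * B := by
        refine hY.trans ?_; linarith
      have hβN : 0 ≤ β / N := by positivity
      have hT1 : |c' n + (β / N) * Real.log (∑ b, Real.exp (N * Q n (j n, b)))| ≤
          M + β * B := by
        calc _ ≤ |c' n| + |(β / N) * Real.log (∑ b, Real.exp (N * Q n (j n, b)))| :=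
              abs_add_le _ _
          _ ≤ Cmax + (β / N) * (LA + N * B) := by
              rw [abs_mul, abs_of_nonneg hβN]
              have := mul_le_mul_of_nonneg_left hXB hβN
              linarith [hc' n]
          _ = M + β * B := by rw [hMdef]; field_simp; ring
      have hT2 : |c'' n + (β / N) * Real.log (∑ e, Real.exp (N * Q n (k n, e)))| ≤
          M + β * B := by
        calc _ ≤ |c'' n| + |(β / N) * Real.log (∑ e, Real.exp (N * Q n (k n, e)))| :=
              abs_add_le _ _
          _ ≤ Cmax + (β / N) * (LA + N * B) := by
              rw [abs_mul, abs_of_nonneg hβN]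
              have := mul_le_mul_of_nonneg_left hYB hβN
              linarith [hc'' n]
          _ = M + β * B := by rw [hMdef]; field_simp; ring
      refine le_trans ?_ (le_max_right _ _)
      set T1 := c' n + (β / N) * Real.log (∑ b, Real.exp (N * Q n (j n, b)))
      set T2 := c'' n + (β / N) * Real.log (∑ e, Real.exp (N * Q n (k n, e)))
      have h1α : 0 ≤ 1 - α n := by linarith [hα1 n]
      calc |(1 - α n) * Q n (sa n) + α n * (T1 + β * θ n * T2)|
          ≤ |(1 - α n) * Q n (sa n)| + |α n * (T1 + β * θ n * T2)| := abs_add_le _ _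
        _ = (1 - α n) * |Q n (sa n)| + α n * |T1 + β * θ n * T2| := by
            rw [abs_mul, abs_mul, abs_of_nonneg h1α, abs_of_nonneg (hα0 n)]
        _ ≤ (1 - α n) * B + α n * (|T1| + β * |θ n| * |T2|) := by
            have h2 : |T1 + β * θ n * T2| ≤ |T1| + β * |θ n| * |T2| := by
              refine (abs_add_le _ _).trans ?_
              rw [abs_mul, abs_mul, abs_of_nonneg hβ0]
            have h2' := mul_le_mul_of_nonneg_left h2 (hα0 n)
            have h2'' := mul_le_mul_of_nonneg_left hQsa h1α
            linarith
        _ ≤ (1 - α n) * B + α n * (1 + β * |θ n|) * (M + β * B) := by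
            have hMB : 0 ≤ M + β * B := add_nonneg hM0 (mul_nonneg hβ0 hB)
            have h3 : |T1| + β * |θ n| * |T2| ≤ (1 + β * |θ n|) * (M + β * B) := by
              have h4 := mul_le_mul_of_nonneg_left hT2
                (mul_nonneg hβ0 (abs_nonneg (θ n)))
              nlinarith [hT1, h4]
            have h5 := mul_le_mul_of_nonneg_left h3 (hα0 n)
            nlinarith [h5]
    · exact le_trans (le_trans (abs_le_maxNorm _ _) hQB) (le_max_left _ _)
  -- main induction
  have key : ∀ n, maxNorm (Q n) ≤
      G * (1 + β * |θ 0|) * ∏ i ∈ Finset.range (n - 1), f i := by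
    intro n
    induction n with
    | zero =>
        simp only [Nat.zero_sub, Finset.range_zero, Finset.prod_empty, mul_one]
        have : G ≤ G * (1 + β * |θ 0|) := by
          linarith [mul_nonneg hG0 (mul_nonneg hβ0 (abs_nonneg (θ 0)))]
        linarith [hQ0.trans hCG]
    | succ n ih =>
        rcases Nat.eq_zero_or_pos n with rfl | hn
        · have h0 : maxNorm (Q 0) ≤ G := hQ0.trans hCG
          have h := step 0 G hG0 h0
          simp only [Nat.add_sub_cancel, Finset.range_zero, Finset.prod_empty, mul_one]
          have ht0 : 0 ≤ 1 + β * |θ 0| := by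
            linarith [mul_nonneg hβ0 (abs_nonneg (θ 0))]
          refine h.trans (max_le ?_ ?_)
          · linarith [mul_nonneg hG0 (mul_nonneg hβ0 (abs_nonneg (θ 0)))]
          · have e1 : M + β * G ≤ G := by nlinarith [hMG]
            have e2 : (1 + β * |θ 0|) * (M + β * G) ≤ (1 + β * |θ 0|) * G :=
              mul_le_mul_of_nonneg_left e1 ht0
            have e3 := mul_le_mul_of_nonneg_left e2 (hα0 0)
            have h4 : 0 ≤ (1 - α 0) * (β * |θ 0|) * G :=
              mul_nonneg (mul_nonneg (by linarith [hα1 0])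
                (mul_nonneg hβ0 (abs_nonneg (θ 0)))) hG0
            nlinarith [e3, h4]
        · set B := G * (1 + β * |θ 0|) * ∏ i ∈ Finset.range (n - 1), f i with hBdef
          have h5 : 0 ≤ G * (1 + β * |θ 0|) :=
            mul_nonneg hG0 (by linarith [mul_nonneg hβ0 (abs_nonneg (θ 0))])
          have hB0 : 0 ≤ B := by
            rw [hBdef]
            exact mul_nonneg h5 (by linarith [hprod1 (n - 1)])
          have h := step n B hB0 ih
          have hn1 : n - 1 + 1 = n := Nat.succ_pred_eq_of_pos hn
          have hT : G * (1 + β * |θ 0|) * ∏ i ∈ Finset.range (n + 1 - 1), f i =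
              B * (1 + α n * β ^ 2 * |θ n|) := by
            have : ∏ i ∈ Finset.range n, f i =
                (∏ i ∈ Finset.range (n - 1), f i) * f (n - 1) := by
              conv_lhs => rw [← hn1]
              exact Finset.prod_range_succ f (n - 1)
            simp only [Nat.add_sub_cancel, this, hBdef]
            have hfn : f (n - 1) = 1 + α n * β ^ 2 * |θ n| := by
              simp only [hfdef, hn1]
            rw [hfn]; ring
          rw [hT]
          have htn : 0 ≤ 1 + β * |θ n| := by
            linarith [mul_nonneg hβ0 (abs_nonneg (θ n))]
          refine h.trans (max_le ?_ ?_)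
          · linarith [mul_nonneg hB0 (mul_nonneg (mul_nonneg (hα0 n) (sq_nonneg β))
              (abs_nonneg (θ n)))]
          · have hθn : |θ n| ≤ |θ 0| := hθmono (Nat.zero_le n)
            have hGB : G * (1 + β * |θ n|) ≤ B := by
              have h6 : G * (1 + β * |θ n|) ≤ G * (1 + β * |θ 0|) :=
                mul_le_mul_of_nonneg_left
                  (by linarith [mul_le_mul_of_nonneg_left hθn hβ0]) hG0
              have h8 : G * (1 + β * |θ 0|) ≤ G * (1 + β * |θ 0|) *
                  ∏ i ∈ Finset.range (n - 1), f i :=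
                le_mul_of_one_le_right h5 (hprod1 (n - 1))
              rw [hBdef]
              exact h6.trans h8
            have h1 : (1 + β * |θ n|) * M ≤ (1 - β) * B := by
              have h7 : (1 + β * |θ n|) * M ≤ (1 + β * |θ n|) * ((1 - β) * G) :=
                mul_le_mul_of_nonneg_left hMG htn
              have h9 := mul_le_mul_of_nonneg_left hGB h1β.le
              nlinarith [h7, h9]
            have h10 := mul_le_mul_of_nonneg_left h1 (hα0 n)
            nlinarith [h10]
  refine ⟨G * (1 + β * |θ 0|) * ∏' i, f i, rfl, fun n => ?_⟩
  refine (key n).trans ?_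
  have h5 : 0 ≤ G * (1 + β * |θ 0|) :=
    mul_nonneg hG0 (by linarith [mul_nonneg hβ0 (abs_nonneg (θ 0))])
  exact mul_le_mul_of_nonneg_left (hPle _) h5
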